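/- Let 0 < α < 1, β > 0, and define c₁(β) = -2(1-α)²/η(β)² - α², and φ(x;β) = (c₁(β) - αx)U'(x;β) - 2α for -1 ≤ x ≤ -α, φ(x;β) = 2x for |x| < α, and φ(x;β) = (c₁(β) + αx)U'(x;β) + 2α for α ≤ x ≤ 1. Then φ(·;β) is an odd C¹ function on [-1,1] and satisfies φ'' + Λ(β) h(x,α) e^{U(x;β)} φ = 0 on (-1,1)\{-α,α}. -/

import Mathlib

open Set Filter Topology

noncomputable def w (x : ℝ) : ℝ := Real.log (1 - Real.tanh (x / Real.sqrt 2) ^ 2)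

noncomputable def artanh (x : ℝ) : ℝ := (1 / 2) * Real.log ((1 + x) / (1 - x))

noncomputable def eta (β : ℝ) : ℝ := Real.sqrt 2 * artanh (Real.sqrt (1 - Real.exp (-β)))

noncomputable def Lam (α β : ℝ) : ℝ := (1 - α) ^ (-2 : ℤ) * Real.exp (-β) * (eta β) ^ 2

noncomputable def step (α x : ℝ) : ℝ := if |x| < α then 0 else 1

noncomputable def U (α β x : ℝ) : ℝ :=
  if |x| < α then β else w (eta β * (|x| - α) / (1 - α)) + β

noncomputable def c₁ (α β : ℝ) : ℝ := -2 * (1 - α) ^ 2 / (eta β) ^ 2 - α ^ 2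

noncomputable def phi (α β x : ℝ) : ℝ :=
  if x ≤ -α then (c₁ α β - α * x) * deriv (U α β) x - 2 * α
  else if x < α then 2 * x
  else (c₁ α β + α * x) * deriv (U α β) x + 2 * α

/-! ### Auxiliary functions -/

noncomputable def Ee (x : ℝ) : ℝ := 1 - Real.tanh (x / Real.sqrt 2) ^ 2
noncomputable def Wd (x : ℝ) : ℝ := -Real.sqrt 2 * Real.tanh (x / Real.sqrt 2)
noncomputable def DW (x : ℝ) : ℝ := -(1 - Real.tanh (x / Real.sqrt 2) ^ 2)
noncomputable def DWd (x : ℝ) : ℝ := Real.sqrt 2 * Real.tanh (x / Real.sqrt 2) * Ee x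

lemma one_sub_tanh_sq_pos (x : ℝ) : 0 < 1 - Real.tanh x ^ 2 := by
  have hc := Real.cosh_pos x
  have h : 1 - Real.tanh x ^ 2 = 1 / Real.cosh x ^ 2 := by
    rw [Real.tanh_eq_sinh_div_cosh, div_pow]
    field_simp <;> nlinarith [Real.cosh_sq_sub_sinh_sq x]
  rw [h]; positivity

lemma Ee_pos (x : ℝ) : 0 < Ee x := one_sub_tanh_sq_pos _

lemma hasDerivAt_tanh (x : ℝ) : HasDerivAt Real.tanh (1 - Real.tanh x ^ 2) x := by
  have hc := (Real.cosh_pos x).ne'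
  have h := (Real.hasDerivAt_sinh x).div (Real.hasDerivAt_cosh x) hc
  have e : Real.tanh = fun x => Real.sinh x / Real.cosh x := by
    funext y; exact Real.tanh_eq_sinh_div_cosh y
  rw [e]
  refine h.congr_deriv (Eq.symm ?_)
  show 1 - (Real.sinh x / Real.cosh x) ^ 2 = _
  field_simp <;> nlinarith [Real.cosh_sq_sub_sinh_sq x]

lemma hasDerivAt_tanh_div (x : ℝ) :
    HasDerivAt (fun x => Real.tanh (x / Real.sqrt 2)) (Ee x * (Real.sqrt 2)⁻¹) x := by
  have := (hasDerivAt_tanh (x / Real.sqrt 2)).comp x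
    ((hasDerivAt_id x).div_const (Real.sqrt 2))
  refine this.congr_deriv ?_
  rw [Ee, one_div]

lemma hasDerivAt_w (x : ℝ) : HasDerivAt w (Wd x) x := by
  have h1 : HasDerivAt (fun x => 1 - Real.tanh (x / Real.sqrt 2) ^ 2)
      (-(2 * Real.tanh (x / Real.sqrt 2) * (Ee x * (Real.sqrt 2)⁻¹))) x := by
    have := ((hasDerivAt_tanh_div x).pow 2).const_sub 1
    refine this.congr_deriv (Eq.symm ?_); ring
  have h2 := h1.log (Ee_pos x).ne'
  refine h2.congr_deriv (Eq.symm ?_)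
  rw [Wd, Ee]
  have hE := (one_sub_tanh_sq_pos (x / Real.sqrt 2)).ne'
  rw [eq_div_iff hE]
  field_simp
  linear_combination (-Real.tanh (x / Real.sqrt 2)) *
    (Real.mul_self_sqrt (by norm_num : (0:ℝ) ≤ 2))

lemma hasDerivAt_Wd (x : ℝ) : HasDerivAt Wd (DW x) x := by
  have := (hasDerivAt_tanh_div x).const_mul (-Real.sqrt 2)
  refine this.congr_deriv (Eq.symm ?_)
  rw [DW, Ee]
  rw [show -Real.sqrt 2 * ((1 - Real.tanh (x / Real.sqrt 2) ^ 2) * (Real.sqrt 2)⁻¹)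
      = -(Real.sqrt 2 * (Real.sqrt 2)⁻¹) * (1 - Real.tanh (x / Real.sqrt 2) ^ 2) by ring,
    mul_inv_cancel₀ (by positivity : (Real.sqrt 2) ≠ 0)]
  ring

lemma hasDerivAt_DW (x : ℝ) : HasDerivAt DW (DWd x) x := by
  have := (((hasDerivAt_tanh_div x).pow 2).const_sub 1).neg
  refine this.congr_deriv (Eq.symm ?_)
  rw [DWd, Ee]
  field_simp
  linear_combination (Real.tanh (x / Real.sqrt 2) * (1 - Real.tanh (x / Real.sqrt 2) ^ 2)) *
    (Real.mul_self_sqrt (by norm_num : (0:ℝ) ≤ 2))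

lemma Wd_zero : Wd 0 = 0 := by simp [Wd]

lemma eta_pos {β : ℝ} (hβ : 0 < β) : 0 < eta β := by
  have h1 : Real.exp (-β) < 1 := by
    rw [Real.exp_lt_one_iff]; linarith
  have h2 : (0:ℝ) < 1 - Real.exp (-β) := by linarith
  have h3 : Real.sqrt (1 - Real.exp (-β)) < 1 := by
    have hlt : 1 - Real.exp (-β) < 1 := by linarith [Real.exp_pos (-β)]
    have h := Real.sqrt_lt_sqrt h2.le hlt
    rwa [Real.sqrt_one] at h
  have h4 : 0 < Real.sqrt (1 - Real.exp (-β)) := Real.sqrt_pos.mpr h2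
  rw [eta, artanh]
  have h5 : (0:ℝ) < 1 - Real.sqrt (1 - Real.exp (-β)) := by linarith
  have h6 : 1 < (1 + Real.sqrt (1 - Real.exp (-β))) / (1 - Real.sqrt (1 - Real.exp (-β))) := by
    rw [lt_div_iff₀ h5]; linarith
  have := Real.log_pos h6
  positivity

/-! ### The explicit pieces -/

noncomputable def sc (α β : ℝ) : ℝ := eta β / (1 - α)

noncomputable def P (α β y : ℝ) : ℝ :=
  (c₁ α β + α * y) * (sc α β * Wd (sc α β * (y - α))) + 2 * α

noncomputable def Q (α β y : ℝ) : ℝ :=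
  α * (sc α β * Wd (sc α β * (y - α))) + (c₁ α β + α * y) * (sc α β ^ 2 * DW (sc α β * (y - α)))

noncomputable def Qd (α β y : ℝ) : ℝ :=
  2 * α * (sc α β ^ 2 * DW (sc α β * (y - α)))
    + (c₁ α β + α * y) * (sc α β ^ 3 * DWd (sc α β * (y - α)))

lemma hasDerivAt_aff (α β y : ℝ) : HasDerivAt (fun y : ℝ => sc α β * (y - α)) (sc α β) y := by
  simpa using ((hasDerivAt_id y).sub_const α).const_mul (sc α β)

lemma hasDerivAt_P (α β y : ℝ) : HasDerivAt (P α β) (Q α β y) y := by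
  have h1 : HasDerivAt (fun y : ℝ => Wd (sc α β * (y - α)))
      (DW (sc α β * (y - α)) * sc α β) y := (hasDerivAt_Wd _).comp y (hasDerivAt_aff α β y)
  have h2 : HasDerivAt (fun y : ℝ => c₁ α β + α * y) α y := by
    simpa using ((hasDerivAt_id y).const_mul α).const_add (c₁ α β)
  have := (h2.mul (h1.const_mul (sc α β))).add_const (2 * α)
  refine this.congr_deriv (Eq.symm ?_)
  rw [Q]; ring

lemma hasDerivAt_Q (α β y : ℝ) : HasDerivAt (Q α β) (Qd α β y) y := by
  have h1 : HasDerivAt (fun y : ℝ => Wd (sc α β * (y - α)))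
      (DW (sc α β * (y - α)) * sc α β) y := (hasDerivAt_Wd _).comp y (hasDerivAt_aff α β y)
  have h1' : HasDerivAt (fun y : ℝ => DW (sc α β * (y - α)))
      (DWd (sc α β * (y - α)) * sc α β) y := (hasDerivAt_DW _).comp y (hasDerivAt_aff α β y)
  have h2 : HasDerivAt (fun y : ℝ => c₁ α β + α * y) α y := by
    simpa using ((hasDerivAt_id y).const_mul α).const_add (c₁ α β)
  have := ((h1.const_mul (sc α β)).const_mul α).add
    (h2.mul (h1'.const_mul (sc α β ^ 2)))
  refine this.congr_deriv (Eq.symm ?_)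
  rw [Qd]; ring

lemma P_alpha (α β : ℝ) : P α β α = 2 * α := by
  simp [P, Wd]

lemma Q_alpha {α β : ℝ} (hα1 : α < 1) (hη : eta β ≠ 0) : Q α β α = 2 := by
  have h1 : (1:ℝ) - α ≠ 0 := by intro h; linarith [h]
  rw [Q, c₁, sc]
  simp [Wd, DW]
  field_simp
  ring

lemma key_identity (α β y : ℝ) :
    Qd α β y + sc α β ^ 2 * Ee (sc α β * (y - α)) * P α β y = 0 := by
  simp only [Qd, P, DW, DWd, Wd, Ee]
  ring

lemma Lam_exp {α β : ℝ} (hα1 : α < 1) (z : ℝ) :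
    Lam α β * Real.exp (w z + β) = sc α β ^ 2 * Ee z := by
  have h2 : (1 - α : ℝ) ≠ 0 := by intro h; linarith [h]
  have h1 : Real.exp (w z) = Ee z := by
    rw [w, Real.exp_log (one_sub_tanh_sq_pos _), Ee]
  rw [Real.exp_add, h1, Lam, sc, Real.exp_neg]
  rw [show ((1:ℝ) - α) ^ (-2:ℤ) = ((1-α)^2)⁻¹ by rw [zpow_neg, zpow_two, sq]]
  field_simp

/-! ### Facts about U -/

lemma U_eq_const {α : ℝ} (β : ℝ) {x : ℝ} (hx : |x| ≤ α) : U α β x = β := by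
  rw [U]
  split_ifs with h
  · rfl
  · have h2 : |x| = α := le_antisymm hx (not_lt.mp h)
    rw [h2]
    simp [w]

lemma U_right {α : ℝ} (β : ℝ) (hα : 0 < α) {x : ℝ} (hx : α ≤ x) :
    U α β x = w (sc α β * (x - α)) + β := by
  have hx0 : 0 ≤ x := le_trans hα.le hx
  rw [U, if_neg (by rw [abs_of_nonneg hx0]; exact not_lt.mpr hx), abs_of_nonneg hx0, sc,
    div_mul_eq_mul_div]

lemma U_even (α β x : ℝ) : U α β (-x) = U α β x := by rw [U, U, abs_neg]

lemma hasDerivAt_V (α β y : ℝ) :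
    HasDerivAt (fun x : ℝ => w (sc α β * (x - α)) + β) (sc α β * Wd (sc α β * (y - α))) y := by
  have := ((hasDerivAt_w (sc α β * (y - α))).comp y (hasDerivAt_aff α β y)).add_const β
  refine this.congr_deriv (Eq.symm ?_)
  ring

lemma hasDerivAt_U_right {α β : ℝ} (hα : 0 < α) {x : ℝ} (hx : α < x) :
    HasDerivAt (U α β) (sc α β * Wd (sc α β * (x - α))) x := by
  apply (hasDerivAt_V α β x).congr_of_eventuallyEq
  filter_upwards [Ioi_mem_nhds hx] with y hy
  exact U_right β hα hy.le

lemma hasDerivAt_U_alpha {α β : ℝ} (hα : 0 < α) : HasDerivAt (U α β) 0 α := by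
  have h1 : HasDerivWithinAt (U α β) 0 (Iic α) α := by
    have hc : HasDerivWithinAt (fun _ : ℝ => β) 0 (Iic α) α := (hasDerivWithinAt_const α _ β)
    apply hc.congr_of_eventuallyEq
    · have hmem : Ioi (-α) ∈ 𝓝[Iic α] α := nhdsWithin_le_nhds (Ioi_mem_nhds (by linarith))
      filter_upwards [hmem, self_mem_nhdsWithin] with y hy1 hy2
      exact U_eq_const β (abs_le.mpr ⟨le_of_lt hy1, hy2⟩)
    · exact U_eq_const β (by rw [abs_of_pos hα])
  have h2 : HasDerivWithinAt (U α β) 0 (Ici α) α := by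
    have hV := (hasDerivAt_V α β α).hasDerivWithinAt (s := Ici α)
    have hV0 : sc α β * Wd (sc α β * (α - α)) = 0 := by
      simp [Wd]
    rw [hV0] at hV
    apply hV.congr_of_eventuallyEq
    · filter_upwards [self_mem_nhdsWithin] with y hy
      exact U_right β hα hy
    · exact U_right β hα le_rfl
  have := h1.union h2
  rw [Iic_union_Ici] at this
  exact this.hasDerivAt (by simp)

lemma derivU_right {α β : ℝ} (hα : 0 < α) {x : ℝ} (hx : α ≤ x) :
    deriv (U α β) x = sc α β * Wd (sc α β * (x - α)) := by
  rcases eq_or_lt_of_le hx with h | h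
  · rw [← h, (hasDerivAt_U_alpha hα).deriv]
    simp [Wd]
  · exact (hasDerivAt_U_right hα h).deriv

lemma derivU_neg (α β x : ℝ) : deriv (U α β) (-x) = -deriv (U α β) x := by
  have h : (fun y => U α β (-y)) = U α β := funext fun y => U_even α β y
  have h2 := deriv_comp_neg (U α β) x
  rw [h] at h2
  linarith

/-! ### The function Phi and its derivative gp -/

noncomputable def Phi (α β x : ℝ) : ℝ :=
  if x ≤ -α then -(P α β (-x)) else if x < α then 2 * x else P α β x

noncomputable def gp (α β x : ℝ) : ℝ :=
  if x ≤ -α then Q α β (-x) else if x < α then 2 else Q α β x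

lemma phi_eq_Phi {α β : ℝ} (hα : 0 < α) (x : ℝ) : phi α β x = Phi α β x := by
  rw [phi, Phi]
  split_ifs with h1 h2
  · have hd : deriv (U α β) x = -(sc α β * Wd (sc α β * (-x - α))) := by
      have ha := derivU_neg α β (-x)
      rw [neg_neg] at ha
      have hb := derivU_right (β := β) hα (show α ≤ -x by linarith)
      rw [hb] at ha
      linarith
    rw [hd, P]; ring
  · rfl
  · rw [derivU_right hα (not_lt.mp h2), P]

lemma Phi_odd {α β : ℝ} (hα : 0 < α) (x : ℝ) : Phi α β (-x) = -Phi α β x := by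
  rw [Phi, Phi]
  split_ifs with h1 h2 h3 h4 h5 h6 h7 <;> (try simp only [neg_neg]) <;>
    first
    | ring1
    | linarith
    | (exfalso; push_neg at *; linarith)

lemma hasDerivAt_Phi {α β : ℝ} (hα : 0 < α) (hα1 : α < 1) (hη : eta β ≠ 0) (x : ℝ) :
    HasDerivAt (Phi α β) (gp α β x) x := by
  have hQα : Q α β α = 2 := Q_alpha hα1 hη
  have hPα : P α β α = 2 * α := P_alpha α β
  have hnegP : ∀ y : ℝ, HasDerivAt (fun z : ℝ => -(P α β (-z))) (Q α β (-y)) y := by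
    intro y
    have := ((hasDerivAt_P α β (-y)).comp y (hasDerivAt_neg y)).neg
    exact this.congr_deriv (by simp)
  rcases lt_trichotomy x (-α) with h | h | h
  · rw [gp, if_pos h.le]
    apply (hnegP x).congr_of_eventuallyEq
    filter_upwards [Iio_mem_nhds h] with y hy
    rw [Phi, if_pos hy.le]
  · subst h
    have hgp : gp α β (-α) = 2 := by rw [gp, if_pos le_rfl, neg_neg, hQα]
    rw [hgp]
    have h1 : HasDerivWithinAt (Phi α β) 2 (Iic (-α)) (-α) := by
      have hP2 : HasDerivAt (fun z : ℝ => -(P α β (-z))) 2 (-α) := by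
        have := hnegP (-α); rwa [neg_neg, hQα] at this
      apply hP2.hasDerivWithinAt.congr_of_eventuallyEq
      · filter_upwards [self_mem_nhdsWithin] with y hy
        rw [Phi, if_pos (mem_Iic.mp hy)]
      · rw [Phi, if_pos le_rfl]
    have h2 : HasDerivWithinAt (Phi α β) 2 (Ici (-α)) (-α) := by
      have hid : HasDerivAt (fun z : ℝ => 2 * z) 2 (-α) := by
        simpa using (hasDerivAt_id (-α : ℝ)).const_mul 2
      apply hid.hasDerivWithinAt.congr_of_eventuallyEq
      · filter_upwards [nhdsWithin_le_nhds (Iio_mem_nhds (show -α < α by linarith)),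
          self_mem_nhdsWithin] with y hy1 hy2
        rw [Phi]
        rcases eq_or_lt_of_le (mem_Ici.mp hy2) with h' | h'
        · rw [if_pos (le_of_eq h'.symm), ← h', neg_neg, hPα]; ring
        · rw [if_neg (by linarith), if_pos (mem_Iio.mp hy1)]
      · rw [Phi, if_pos le_rfl, neg_neg, hPα]; ring
    have h3 := h1.union h2
    rw [Iic_union_Ici] at h3
    exact h3.hasDerivAt (by simp)
  · rcases lt_trichotomy x α with h2 | h2 | h2
    · rw [gp, if_neg (by linarith), if_pos h2]
      have hid : HasDerivAt (fun z : ℝ => 2 * z) 2 x := by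
        simpa using (hasDerivAt_id x).const_mul 2
      apply hid.congr_of_eventuallyEq
      filter_upwards [Ioo_mem_nhds h h2] with y hy
      rw [Phi, if_neg (by linarith [hy.1]), if_pos hy.2]
    · rw [h2]
      have hgp : gp α β α = 2 := by
        rw [gp, if_neg (by linarith), if_neg (lt_irrefl α), hQα]
      rw [hgp]
      have h1 : HasDerivWithinAt (Phi α β) 2 (Iic α) α := by
        have hid : HasDerivAt (fun z : ℝ => 2 * z) 2 α := by
          simpa using (hasDerivAt_id (α : ℝ)).const_mul 2
        apply hid.hasDerivWithinAt.congr_of_eventuallyEq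
        · filter_upwards [nhdsWithin_le_nhds (Ioi_mem_nhds (show -α < α by linarith)),
            self_mem_nhdsWithin] with y hy1 hy2
          rw [Phi]
          rcases eq_or_lt_of_le (mem_Iic.mp hy2) with h' | h'
          · rw [if_neg (by have := mem_Ioi.mp hy1; linarith),
              if_neg (by rw [h']; exact lt_irrefl α), h', hPα]
          · rw [if_neg (by have := mem_Ioi.mp hy1; linarith), if_pos h']
        · rw [Phi, if_neg (by linarith), if_neg (lt_irrefl α), hPα]
      have h2 : HasDerivWithinAt (Phi α β) 2 (Ici α) α := by
        have hP2 : HasDerivAt (P α β) 2 α := by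
          have := hasDerivAt_P α β α; rwa [hQα] at this
        apply hP2.hasDerivWithinAt.congr_of_eventuallyEq
        · filter_upwards [self_mem_nhdsWithin] with y hy
          rw [Phi, if_neg (by intro hc; linarith [mem_Ici.mp hy]), if_neg (not_lt.mpr hy)]
        · rw [Phi, if_neg (by linarith), if_neg (lt_irrefl α)]
      have h3 := h1.union h2
      rw [Iic_union_Ici] at h3
      exact h3.hasDerivAt (by simp)
    · rw [gp, if_neg (by linarith), if_neg (not_lt.mpr h2.le)]
      apply (hasDerivAt_P α β x).congr_of_eventuallyEq
      filter_upwards [Ioi_mem_nhds h2] with y hy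
      rw [Phi, if_neg (by intro hc; linarith [mem_Ioi.mp hy]), if_neg (by
        exact not_lt.mpr (le_of_lt hy))]

lemma gp_cont {α β : ℝ} (hα : 0 < α) (hα1 : α < 1) (hη : eta β ≠ 0) :
    Continuous (gp α β) := by
  have hQα : Q α β α = 2 := Q_alpha hα1 hη
  have hQc : Continuous (Q α β) :=
    Differentiable.continuous (fun y => (hasDerivAt_Q α β y).differentiableAt)
  have hinner : (fun x : ℝ => if x < α then (2:ℝ) else Q α β x)
      = fun x : ℝ => if α ≤ x then Q α β x else 2 := by
    funext x
    by_cases h : α ≤ x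
    · rw [if_neg (not_lt.mpr h), if_pos h]
    · rw [if_pos (not_le.mp h), if_neg h]
  have hinner_cont : Continuous fun x : ℝ => if x < α then (2:ℝ) else Q α β x := by
    rw [hinner]
    exact Continuous.if_le hQc continuous_const continuous_const continuous_id
      (fun x hx => by rw [← hx, hQα])
  show Continuous fun x : ℝ => if x ≤ -α then Q α β (-x) else if x < α then (2:ℝ) else Q α β x
  apply Continuous.if_le (hQc.comp continuous_neg) hinner_cont continuous_id continuous_const
  intro x hx
  have hx' : x = -α := hx
  subst hx'
  show Q α β (-(-α)) = _
  rw [neg_neg, hQα, if_pos (show (-α:ℝ) < α by linarith)]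

lemma U_left {α : ℝ} (β : ℝ) (hα : 0 < α) {x : ℝ} (hx : x ≤ -α) :
    U α β x = w (sc α β * (-x - α)) + β := by
  have h1 : U α β x = U α β (-x) := (U_even α β x).symm
  rw [h1, U_right β hα (by linarith : α ≤ -x)]

theorem stmt_18 (α β : ℝ) (hα : 0 < α ∧ α < 1) (hβ : 0 < β) :
    (∀ x ∈ Icc (-1 : ℝ) 1, phi α β (-x) = -phi α β x) ∧
    ContDiffOn ℝ 1 (phi α β) (Icc (-1) 1) ∧
    (∀ x ∈ Ioo (-1 : ℝ) 1 \ {-α, α},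
      deriv (deriv (phi α β)) x
        + Lam α β * step α x * Real.exp (U α β x) * phi α β x = 0) := by
  obtain ⟨hα0, hα1⟩ := hα
  have hη : eta β ≠ 0 := (eta_pos hβ).ne'
  have hfe : phi α β = Phi α β := funext (phi_eq_Phi hα0)
  have hder : deriv (Phi α β) = gp α β :=
    funext fun y => (hasDerivAt_Phi hα0 hα1 hη y).deriv
  refine ⟨fun x _ => by rw [hfe]; exact Phi_odd hα0 x, ?_, ?_⟩
  · rw [hfe]
    have hcd : ContDiff ℝ 1 (Phi α β) := by
      rw [contDiff_one_iff_deriv]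
      exact ⟨fun y => (hasDerivAt_Phi hα0 hα1 hη y).differentiableAt,
        hder ▸ gp_cont hα0 hα1 hη⟩
    exact hcd.contDiffOn
  · intro x hx
    obtain ⟨⟨hx1, hx2⟩, hxn⟩ := hx
    simp only [mem_insert_iff, mem_singleton_iff, not_or] at hxn
    obtain ⟨hne1, hne2⟩ := hxn
    rw [hfe, hder]
    rcases lt_trichotomy x (-α) with h | h | h
    · have hgev : gp α β =ᶠ[𝓝 x] fun y => Q α β (-y) := by
        filter_upwards [Iio_mem_nhds h] with y hy
        rw [gp, if_pos (le_of_lt hy)]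
      have hQd : HasDerivAt (fun y : ℝ => Q α β (-y)) (-Qd α β (-x)) x := by
        exact ((hasDerivAt_Q α β (-x)).comp x (hasDerivAt_neg x)).congr_deriv (by simp)
      rw [hgev.deriv_eq, hQd.deriv]
      have hstep : step α x = 1 := by
        rw [step, if_neg (show ¬|x| < α by
          rw [abs_of_neg (by linarith : x < 0)]; exact not_lt.mpr (by linarith))]
      have hU : U α β x = w (sc α β * (-x - α)) + β := U_left β hα0 h.le
      have hPhi : Phi α β x = -(P α β (-x)) := by rw [Phi, if_pos h.le]
      rw [hstep, hU, hPhi]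
      linear_combination (-1 : ℝ) * key_identity α β (-x)
        + (-(P α β (-x))) * Lam_exp hα1 (sc α β * (-x - α))
    · exact absurd h hne1
    · rcases lt_trichotomy x α with h2 | h2 | h2
      · have hgev : gp α β =ᶠ[𝓝 x] fun _ => (2:ℝ) := by
          filter_upwards [Ioo_mem_nhds h h2] with y hy
          rw [gp, if_neg (by intro hc; linarith [hy.1]), if_pos hy.2]
        rw [hgev.deriv_eq, deriv_const]
        have hstep : step α x = 0 := by rw [step, if_pos (abs_lt.mpr ⟨h, h2⟩)]
        rw [hstep]; ring
      · exact absurd h2 hne2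
      · have hgev : gp α β =ᶠ[𝓝 x] Q α β := by
          filter_upwards [Ioi_mem_nhds h2] with y hy
          have hy' : α < y := hy
          rw [gp, if_neg (by intro hc; linarith), if_neg (not_lt.mpr hy'.le)]
        rw [hgev.deriv_eq, (hasDerivAt_Q α β x).deriv]
        have hstep : step α x = 1 := by
          rw [step, if_neg (show ¬|x| < α by
            rw [abs_of_pos (by linarith : 0 < x)]; exact not_lt.mpr h2.le)]
        have hU := U_right β hα0 h2.le
        have hPhi : Phi α β x = P α β x := by
          rw [Phi, if_neg (by intro hc; linarith), if_neg (not_lt.mpr h2.le)]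
        rw [hstep, hU, hPhi]
        linear_combination key_identity α β x + (P α β x) * Lam_exp hα1 (sc α β * (x - α))
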